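/- If the semantic realizability checker is under-approximate (i.e., realizable(ω,φ) implies the existence of a continuation ω' with φ(parse(ωω'))), then the constrained decoding algorithm is sound: any complete string it returns satisfies the constraint φ on its parse. -/

import Mathlib

/-- The set of prefixes that the constrained-decoding worklist algorithm may ever
enqueue: it starts from the empty string, and whenever a prefix `ω` has been
dequeued, every one-token extension `ω ++ [τ]` with `τ ≠ END` that passes the
realizability check is enqueued. -/
inductive Enqueued {Tok : Type*} (realizable : List Tok → Prop) (END : Tok) :
    List Tok → Prop
  | empty : Enqueued realizable END []
  | step {ω : List Tok} {τ : Tok} :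
      Enqueued realizable END ω → realizable (ω ++ [τ]) → τ ≠ END →
      Enqueued realizable END (ω ++ [τ])

/-- The algorithm returns a complete string `ω` exactly when `ω = ω₀ ++ [END]`
for some dequeued prefix `ω₀` and `ω` passes the realizability check. -/
def Returns {Tok : Type*} (realizable : List Tok → Prop) (END : Tok)
    (ω : List Tok) : Prop :=
  ∃ ω₀, Enqueued realizable END ω₀ ∧ ω = ω₀ ++ [END] ∧ realizable ω

/-- **Soundness of constrained decoding with an under-approximate checker.**
If the realizability checker is under-approximate, any complete string returned
by the constrained decoding algorithm parses to an AST satisfying `φ`. -/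
theorem soundness_of_underapproximate
    {Tok AST : Type*} (END : Tok)
    (parse : List Tok → Option AST) (φ : AST → Prop)
    (realizable : List Tok → Prop)
    -- every string satisfying φ contains END exactly once, in the final position
    (hend : ∀ ω : List Tok, (∃ t, parse ω = some t ∧ φ t) →
      ω.getLast? = some END ∧ END ∉ ω.dropLast)
    -- the checker is under-approximate
    (hunder : ∀ ω : List Tok, realizable ω →
      ∃ ω' : List Tok, ∃ t, parse (ω ++ ω') = some t ∧ φ t) :
    ∀ ω : List Tok, Returns realizable END ω → ∃ t, parse ω = some t ∧ φ t := by
  rintro ω ⟨ω₀, -, rfl, hreal⟩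
  obtain ⟨ω', t, hp, hφ⟩ := hunder _ hreal
  obtain ⟨-, hnot⟩ := hend _ ⟨t, hp, hφ⟩
  rcases ω' with _ | ⟨a, l⟩
  · exact ⟨t, by simpa using hp, hφ⟩
  · exfalso
    apply hnot
    have : (ω₀ ++ [END] ++ a :: l).dropLast = ω₀ ++ [END] ++ (a :: l).dropLast := by
      rw [List.dropLast_append_of_ne_nil (List.cons_ne_nil a l)]
    rw [this]
    simp
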